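/- Let G be continuously differentiable on an open interval containing [ν, μ] with ν < μ, and let W : [ν, μ] → ℝ be nonnegative, continuous, and symmetric about (ν+μ)/2. Then ((G(ν)+G(μ))/2) · ∫_ν^μ W(x) dx − ∫_ν^μ W(x)G(x) dx = ((μ-ν)/4) · ∫_0^1 [∫_{m(γ)}^{n(γ)} W(x) dx] · (G'(n(γ)) − G'(m(γ))) dγ, where m(γ) = γν + (1-γ)(ν+μ)/2 and n(γ) = γμ + (1-γ)(ν+μ)/2. -/

import Mathlib

open intervalIntegral Set

theorem fejer_identity
    (ν μ a b : ℝ) (hνμ : ν < μ) (hab : Set.Icc ν μ ⊆ Set.Ioo a b)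
    (G W : ℝ → ℝ)
    (hG : ContDiffOn ℝ 1 G (Set.Ioo a b))
    (hWnonneg : ∀ x ∈ Set.Icc ν μ, 0 ≤ W x)
    (hWcont : ContinuousOn W (Set.Icc ν μ))
    (hWsym : ∀ x ∈ Set.Icc ν μ, W (ν + μ - x) = W x) :
    (G ν + G μ) / 2 * (∫ x in ν..μ, W x) - (∫ x in ν..μ, W x * G x)
      = (μ - ν) / 4 *
        ∫ γ in (0:ℝ)..1,
          (∫ x in (γ * ν + (1 - γ) * ((ν + μ) / 2))..(γ * μ + (1 - γ) * ((ν + μ) / 2)), W x)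
            * (deriv G (γ * μ + (1 - γ) * ((ν + μ) / 2))
                - deriv G (γ * ν + (1 - γ) * ((ν + μ) / 2))) := by
  have hle : ν ≤ μ := hνμ.le
  set c : ℝ := (ν + μ) / 2 with hc
  set hh : ℝ := (μ - ν) / 2 with hhh
  have hh0 : (0:ℝ) < hh := by rw [hhh]; linarith
  have hhne : hh ≠ 0 := ne_of_gt hh0
  -- clamp projection
  set p : ℝ → ℝ := fun x => max ν (min x μ) with hp
  have hpmem : ∀ x, p x ∈ Set.Icc ν μ := by
    intro x
    constructor
    · exact le_max_left _ _
    · exact max_le hle (min_le_right _ _)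
  set W' : ℝ → ℝ := fun x => W (p x) with hW'
  have hW'cont : Continuous W' := by
    apply hWcont.comp_continuous
    · exact continuous_const.max (continuous_id.min continuous_const)
    · exact hpmem
  have hW'eq : ∀ x ∈ Set.Icc ν μ, W' x = W x := by
    intro x hx
    have : p x = x := by
      simp only [hp]
      rw [min_eq_left hx.2, max_eq_right hx.1]
    simp [hW', this]
  -- the two curves
  set m : ℝ → ℝ := fun γ => c - γ * hh with hm
  set n : ℝ → ℝ := fun γ => c + γ * hh with hn
  have hm_mem : ∀ γ ∈ Set.Icc (0:ℝ) 1, m γ ∈ Set.Icc ν μ := by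
    intro γ hγ
    obtain ⟨h0, h1⟩ := hγ
    constructor <;> [skip; skip] <;> (simp only [hm, hc, hhh]; nlinarith)
  have hn_mem : ∀ γ ∈ Set.Icc (0:ℝ) 1, n γ ∈ Set.Icc ν μ := by
    intro γ hγ
    obtain ⟨h0, h1⟩ := hγ
    constructor <;> [skip; skip] <;> (simp only [hn, hc, hhh]; nlinarith)
  have hmn_le : ∀ γ ∈ Set.Icc (0:ℝ) 1, m γ ≤ n γ := by
    intro γ hγ
    simp only [hm, hn]
    nlinarith [hγ.1]
  -- derivative facts of G
  have hGdiff : ∀ x ∈ Set.Icc ν μ, HasDerivAt G (deriv G x) x := by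
    intro x hx
    exact ((hG.differentiableOn one_ne_zero).differentiableAt
      (isOpen_Ioo.mem_nhds (hab hx))).hasDerivAt
  have hG'cont : ContinuousOn (deriv G) (Set.Ioo a b) :=
    hG.continuousOn_deriv_of_isOpen isOpen_Ioo le_rfl
  have hGcont : ContinuousOn G (Set.Icc ν μ) := (hG.continuousOn).mono hab
  -- antiderivative of W'
  set A : ℝ → ℝ := fun u => ∫ x in c..u, W' x with hA
  have hAder : ∀ u : ℝ, HasDerivAt A (W' u) u := by
    intro u
    exact integral_hasDerivAt_right (hW'cont.intervalIntegrable _ _)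
      (hW'cont.stronglyMeasurableAtFilter _ _) hW'cont.continuousAt
  set F : ℝ → ℝ := fun γ => A (n γ) - A (m γ) with hF
  have hFeq : ∀ γ, (∫ x in m γ..n γ, W' x) = F γ := by
    intro γ
    rw [hF]
    exact (integral_interval_sub_left (hW'cont.intervalIntegrable _ _)
      (hW'cont.intervalIntegrable _ _)).symm
  have hnder : ∀ γ : ℝ, HasDerivAt n hh γ := by
    intro γ
    simpa [hn] using ((hasDerivAt_id γ).mul_const hh).const_add c
  have hmder : ∀ γ : ℝ, HasDerivAt m (-hh) γ := by
    intro γ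
    simpa using (((hasDerivAt_id γ).mul_const hh).const_sub c)
  have hFder : ∀ γ : ℝ, HasDerivAt F ((W' (n γ) + W' (m γ)) * hh) γ := by
    intro γ
    have h1 := (hAder (n γ)).comp γ (hnder γ)
    have h2 := (hAder (m γ)).comp γ (hmder γ)
    have := h1.sub h2
    refine this.congr_deriv ?_
    ring
  set H : ℝ → ℝ := fun γ => G (n γ) + G (m γ) with hH
  have hHder : ∀ γ ∈ Set.uIcc (0:ℝ) 1,
      HasDerivAt H ((deriv G (n γ) - deriv G (m γ)) * hh) γ := by
    intro γ hγ
    rw [Set.uIcc_of_le zero_le_one] at hγ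
    have h1 := (hGdiff (n γ) (hn_mem γ hγ)).comp γ (hnder γ)
    have h2 := (hGdiff (m γ) (hm_mem γ hγ)).comp γ (hmder γ)
    have := h1.add h2
    refine this.congr_deriv ?_
    ring
  -- continuity of pieces on [0,1]
  have hncont : Continuous n := by fun_prop
  have hmcont : Continuous m := by fun_prop
  have hF'int : IntervalIntegrable (fun γ => (W' (n γ) + W' (m γ)) * hh) MeasureTheory.volume 0 1 := by
    apply Continuous.intervalIntegrable
    fun_prop
  have hG'n : ContinuousOn (fun γ => deriv G (n γ)) (Set.Icc (0:ℝ) 1) :=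
    hG'cont.comp hncont.continuousOn (fun γ hγ => hab (hn_mem γ hγ))
  have hG'm : ContinuousOn (fun γ => deriv G (m γ)) (Set.Icc (0:ℝ) 1) :=
    hG'cont.comp hmcont.continuousOn (fun γ hγ => hab (hm_mem γ hγ))
  have hH'int : IntervalIntegrable (fun γ => (deriv G (n γ) - deriv G (m γ)) * hh)
      MeasureTheory.volume 0 1 := by
    apply ContinuousOn.intervalIntegrable
    rw [Set.uIcc_of_le zero_le_one]
    exact ((hG'n.sub hG'm).mul continuousOn_const)
  -- integration by parts
  have hIBP : ∫ γ in (0:ℝ)..1, F γ * ((deriv G (n γ) - deriv G (m γ)) * hh)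
      = F 1 * H 1 - F 0 * H 0 - ∫ γ in (0:ℝ)..1, ((W' (n γ) + W' (m γ)) * hh) * H γ :=
    intervalIntegral.integral_mul_deriv_eq_deriv_mul
      (fun γ _ => hFder γ) hHder hF'int hH'int
  -- boundary values
  have hm0 : m 0 = c := by simp [hm]
  have hn0 : n 0 = c := by simp [hn]
  have hm1 : m 1 = ν := by simp [hm, hc, hhh]; ring
  have hn1 : n 1 = μ := by simp [hn, hc, hhh]; ring
  have hF0 : F 0 = 0 := by simp [hF, hm0, hn0]
  have hF1 : F 1 = ∫ x in ν..μ, W' x := by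
    rw [← hFeq 1, hm1, hn1]
  have hH1 : H 1 = G μ + G ν := by rw [hH]; simp [hm1, hn1]
  -- substitution computations
  set f : ℝ → ℝ := fun x => W' x * G x with hf
  have hfint : ∀ s t, s ∈ Set.Icc ν μ → t ∈ Set.Icc ν μ →
      IntervalIntegrable f MeasureTheory.volume s t := by
    intro s t hs ht
    apply ContinuousOn.intervalIntegrable
    exact (hW'cont.continuousOn.mul hGcont).mono (Set.uIcc_subset_Icc hs ht)
  have hsub1 : (∫ γ in (0:ℝ)..1, f (n γ)) = hh⁻¹ * ∫ x in c..μ, f x := by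
    have : (∫ γ in (0:ℝ)..1, f (n γ)) = ∫ γ in (0:ℝ)..1, f (hh * γ + c) := by
      apply intervalIntegral.integral_congr
      intro γ _
      simp [hn]; ring_nf
    rw [this, intervalIntegral.integral_comp_mul_add f hhne c]
    have e1 : hh * 0 + c = c := by ring
    have e2 : hh * 1 + c = μ := by rw [hhh, hc]; ring
    rw [e1, e2, smul_eq_mul]
  have hsub2 : (∫ γ in (0:ℝ)..1, f (m γ)) = hh⁻¹ * ∫ x in ν..c, f x := by
    have : (∫ γ in (0:ℝ)..1, f (m γ)) = ∫ γ in (0:ℝ)..1, f ((-hh) * γ + c) := by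
      apply intervalIntegral.integral_congr
      intro γ _
      simp [hm]; ring_nf
    rw [this, intervalIntegral.integral_comp_mul_add f (neg_ne_zero.mpr hhne) c]
    have e1 : -hh * 0 + c = c := by ring
    have e2 : -hh * 1 + c = ν := by rw [hhh, hc]; ring
    rw [e1, e2, smul_eq_mul, intervalIntegral.integral_symm ν c]
    field_simp
  have hc_mem : c ∈ Set.Icc ν μ := by
    constructor <;> (rw [hc] <;> linarith)
  have hadj : (∫ x in ν..c, f x) + (∫ x in c..μ, f x) = ∫ x in ν..μ, f x :=
    intervalIntegral.integral_add_adjacent_intervals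
      (hfint ν c (by constructor <;> linarith) hc_mem)
      (hfint c μ hc_mem (by constructor <;> linarith))
  -- symmetry: W'(m γ) = W'(n γ) on [0,1]
  have hWsym' : ∀ γ ∈ Set.Icc (0:ℝ) 1, W' (m γ) = W' (n γ) := by
    intro γ hγ
    rw [hW'eq _ (hm_mem γ hγ), hW'eq _ (hn_mem γ hγ)]
    have : m γ = ν + μ - n γ := by rw [hm, hn, hc]; ring
    rw [this, hWsym _ (hn_mem γ hγ)]
  -- the key integral computation
  have hkey : (∫ γ in (0:ℝ)..1, ((W' (n γ) + W' (m γ)) * hh) * H γ)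
      = 2 * ∫ x in ν..μ, f x := by
    have step1 : (∫ γ in (0:ℝ)..1, ((W' (n γ) + W' (m γ)) * hh) * H γ)
        = ∫ γ in (0:ℝ)..1, 2 * hh * (f (n γ) + f (m γ)) := by
      apply intervalIntegral.integral_congr
      intro γ hγ
      rw [Set.uIcc_of_le zero_le_one] at hγ
      simp only [hH, hf]
      rw [← hWsym' γ hγ]
      ring
    rw [step1]
    have hfnint : IntervalIntegrable (fun γ => f (n γ)) MeasureTheory.volume 0 1 := by
      apply ContinuousOn.intervalIntegrable
      rw [Set.uIcc_of_le zero_le_one]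
      exact (hW'cont.continuousOn.mul hGcont).comp hncont.continuousOn
        (fun γ hγ => hn_mem γ hγ)
    have hfmint : IntervalIntegrable (fun γ => f (m γ)) MeasureTheory.volume 0 1 := by
      apply ContinuousOn.intervalIntegrable
      rw [Set.uIcc_of_le zero_le_one]
      exact (hW'cont.continuousOn.mul hGcont).comp hmcont.continuousOn
        (fun γ hγ => hm_mem γ hγ)
    rw [intervalIntegral.integral_const_mul, intervalIntegral.integral_add hfnint hfmint,
      hsub1, hsub2, ← hadj]
    field_simp
    ring
  -- rewrite the goal integrals in terms of W'
  have goal_inner : (∫ γ in (0:ℝ)..1,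
      (∫ x in (γ * ν + (1 - γ) * c)..(γ * μ + (1 - γ) * c), W x)
        * (deriv G (γ * μ + (1 - γ) * c) - deriv G (γ * ν + (1 - γ) * c)))
      = ∫ γ in (0:ℝ)..1, F γ * (deriv G (n γ) - deriv G (m γ)) := by
    apply intervalIntegral.integral_congr
    intro γ hγ
    rw [Set.uIcc_of_le zero_le_one] at hγ
    have em : γ * ν + (1 - γ) * c = m γ := by simp only [hm]; rw [hc, hhh]; ring
    have en : γ * μ + (1 - γ) * c = n γ := by simp only [hn]; rw [hc, hhh]; ring
    simp only [em, en]
    rw [← hFeq γ]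
    congr 1
    apply intervalIntegral.integral_congr
    intro x hx
    rw [Set.uIcc_of_le (hmn_le γ hγ)] at hx
    exact (hW'eq x ⟨le_trans (hm_mem γ hγ).1 hx.1, le_trans hx.2 (hn_mem γ hγ).2⟩).symm
  have goal_W : (∫ x in ν..μ, W x) = ∫ x in ν..μ, W' x := by
    apply intervalIntegral.integral_congr
    intro x hx
    rw [Set.uIcc_of_le hle] at hx
    exact (hW'eq x hx).symm
  have goal_WG : (∫ x in ν..μ, W x * G x) = ∫ x in ν..μ, f x := by
    apply intervalIntegral.integral_congr
    intro x hx
    rw [Set.uIcc_of_le hle] at hx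
    rw [hf]
    simp [hW'eq x hx]
  rw [goal_inner, goal_W, goal_WG]
  -- final algebra
  have hpull : (∫ γ in (0:ℝ)..1, F γ * ((deriv G (n γ) - deriv G (m γ)) * hh))
      = (∫ γ in (0:ℝ)..1, F γ * (deriv G (n γ) - deriv G (m γ))) * hh := by
    rw [← intervalIntegral.integral_mul_const]
    apply intervalIntegral.integral_congr
    intro γ _
    ring
  rw [hpull, hF0, hF1, hH1, hkey] at hIBP
  have h4 : (μ - ν) / 4 = hh / 2 := by rw [hhh]; ring
  rw [h4]
  set J := ∫ γ in (0:ℝ)..1, F γ * (deriv G (n γ) - deriv G (m γ))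
  set I1 := ∫ x in ν..μ, W' x
  set I2 := ∫ x in ν..μ, f x
  -- hIBP : J * hh = I1 * (G μ + G ν) - 0 - 2 * I2
  nlinarith [hIBP]
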